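/- Let ζ ∈ (0,1) be such that 1/(2ζ) is a positive integer, let X be a set, and let C be a class of functions from X to [0,1] with sfat_{2ζ}(C) = d finite. Then there exists a deterministic online learner L over domain X with feedback alphabet [0,1] such that: for every target concept c ∈ C, every T ∈ ℕ, every sequence of points x_1,…,x_T ∈ X, and every feedback sequence a_1,…,a_T ∈ [0,1] satisfying |a_t − c(x_t)| ≤ ζ for all t ∈ [T], the predictions ŷ_t := L((x_1,a_1),…,(x_{t−1},a_{t−1}); x_t) satisfy: the number of rounds t ∈ [T] with |ŷ_t − c(x_t)| > 5ζ is at most d. -/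

import Mathlib

open MeasureTheory

def HasSfatTree {X : Type*} (C : Set (X → ℝ)) (ε : ℝ) (k : ℕ) : Prop :=
  ∃ (pt : List Bool → X) (th : List Bool → ℝ),
    (∀ w : List Bool, w.length < k → th w ∈ Set.Icc (0 : ℝ) 1) ∧
    ∀ v : Fin k → Bool, ∃ f ∈ C, ∀ i : Fin k,
      (v i = true →
        th ((List.ofFn v).take i.1) + ε ≤ f (pt ((List.ofFn v).take i.1))) ∧
      (v i = false →
        f (pt ((List.ofFn v).take i.1)) ≤ th ((List.ofFn v).take i.1) - ε)

theorem sfat_mono_set {X : Type*} {V W : Set (X → ℝ)} (h : V ⊆ W) {ε : ℝ} {k : ℕ}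
    (hV : HasSfatTree V ε k) : HasSfatTree W ε k := by
  obtain ⟨pt, th, hb, hs⟩ := hV
  refine ⟨pt, th, hb, fun v => ?_⟩
  obtain ⟨f, hf, hfs⟩ := hs v
  exact ⟨f, h hf, hfs⟩

theorem sfat_mono_depth {X : Type*} {C : Set (X → ℝ)} {ε : ℝ} {j k : ℕ} (hjk : j ≤ k)
    (hV : HasSfatTree C ε k) : HasSfatTree C ε j := by
  obtain ⟨pt, th, hb, hs⟩ := hV
  refine ⟨pt, th, fun w hw => hb w (lt_of_lt_of_le hw hjk), fun v => ?_⟩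
  set vb : Fin k → Bool := fun i => if h : i.1 < j then v ⟨i.1, h⟩ else false with hvb
  obtain ⟨f, hf, hfs⟩ := hs vb
  refine ⟨f, hf, fun i => ?_⟩
  have hik : i.1 < k := lt_of_lt_of_le i.2 hjk
  have htake : (List.ofFn v).take i.1 = (List.ofFn vb).take i.1 := by
    apply List.ext_getElem
    · simp [Nat.min_eq_left (le_of_lt i.2), Nat.min_eq_left (le_of_lt hik)]
    · intro n h1 h2
      simp only [List.getElem_take, List.getElem_ofFn]
      have hnj : n < j := by
        simp only [List.length_take, List.length_ofFn] at h1
        omega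
      simp [hvb, hnj]
  have hval : vb ⟨i.1, hik⟩ = v i := by simp [hvb, i.2]
  have := hfs ⟨i.1, hik⟩
  rw [hval] at this
  rw [htake]
  exact this

theorem sfat_join {X : Type*} {V : Set (X → ℝ)} {ε th : ℝ} (x : X)
    (hth : th ∈ Set.Icc (0 : ℝ) 1) {k : ℕ}
    (h0 : HasSfatTree {f ∈ V | f x ≤ th - ε} ε k)
    (h1 : HasSfatTree {f ∈ V | th + ε ≤ f x} ε k) :
    HasSfatTree V ε (k + 1) := by
  obtain ⟨p0, t0, hb0, hs0⟩ := h0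
  obtain ⟨p1, t1, hb1, hs1⟩ := h1
  refine ⟨fun w => match w with | [] => x | b :: w' => if b then p1 w' else p0 w',
          fun w => match w with | [] => th | b :: w' => if b then t1 w' else t0 w', ?_, ?_⟩
  · intro w hw
    match w with
    | [] => exact hth
    | b :: w' =>
      have : w'.length < k := by simpa using hw
      cases b
      · simpa using hb0 w' this
      · simpa using hb1 w' this
  · intro v
    have hofn : List.ofFn v = v 0 :: List.ofFn (fun i : Fin k => v i.succ) := List.ofFn_succ
    cases hb : v 0
    · obtain ⟨f, hfV, hf⟩ := hs0 (fun i : Fin k => v i.succ)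
      refine ⟨f, hfV.1, fun i => ?_⟩
      refine Fin.cases ?_ (fun i' => ?_) i
      · constructor
        · intro h; rw [hb] at h; exact absurd h (by simp)
        · intro _
          simpa using hfV.2
      · have hpref : (List.ofFn v).take ((i'.succ : Fin (k+1)).1) =
            v 0 :: (List.ofFn (fun i : Fin k => v i.succ)).take i'.1 := by
          rw [hofn]; rfl
        rw [hpref, hb]
        simpa using hf i'
    · obtain ⟨f, hfV, hf⟩ := hs1 (fun i : Fin k => v i.succ)
      refine ⟨f, hfV.1, fun i => ?_⟩
      refine Fin.cases ?_ (fun i' => ?_) i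
      · constructor
        · intro _
          simpa using hfV.2
        · intro h; rw [hb] at h; exact absurd h (by simp)
      · have hpref : (List.ofFn v).take ((i'.succ : Fin (k+1)).1) =
            v 0 :: (List.ofFn (fun i : Fin k => v i.succ)).take i'.1 := by
          rw [hofn]; rfl
        rw [hpref, hb]
        simpa using hf i'

theorem sfat_zero {X : Type*} {V : Set (X → ℝ)} (x0 : X) {ε : ℝ} (hV : V.Nonempty) :
    HasSfatTree V ε 0 := by
  obtain ⟨f, hf⟩ := hV
  exact ⟨fun _ => x0, fun _ => 0, by intro w hw; omega, fun v => ⟨f, hf, fun i => i.elim0⟩⟩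

noncomputable section

open Classical in
def sfD {X : Type*} (ε : ℝ) (d : ℕ) (V : Set (X → ℝ)) : ℕ :=
  Nat.findGreatest (fun k => HasSfatTree V ε k) d

def VSp {X : Type*} (C : Set (X → ℝ)) (ζ : ℝ) (h : List (X × ℝ)) : Set (X → ℝ) :=
  {f ∈ C | ∀ p ∈ h, |f p.1 - p.2| ≤ ζ}

def gpt (ζ : ℝ) (j : ℕ) : ℝ := (2 * j + 1) * ζ

def Bkt {X : Type*} (V : Set (X → ℝ)) (x : X) (ζ : ℝ) (j : ℕ) : Set (X → ℝ) :=
  {f ∈ V | |f x - gpt ζ j| ≤ 2 * ζ}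

open Classical in
def SelF {X : Type*} (C : Set (X → ℝ)) (ζ : ℝ) (d m : ℕ) (h : List (X × ℝ)) (x : X) : Finset ℕ :=
  (Finset.range m).filter fun j =>
    HasSfatTree (Bkt (VSp C ζ h) x ζ j) (2 * ζ) (sfD (2 * ζ) d (VSp C ζ h))

open Classical in
def Lrn {X : Type*} (C : Set (X → ℝ)) (ζ : ℝ) (d m : ℕ) (h : List (X × ℝ)) (x : X) : ℝ :=
  if hS : (SelF C ζ d m h x).Nonempty then
    (gpt ζ ((SelF C ζ d m h x).min' hS) + gpt ζ ((SelF C ζ d m h x).max' hS)) / 2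
  else 1 / 2

open Classical in
theorem sfD_le {X : Type*} (ε : ℝ) (d : ℕ) (V : Set (X → ℝ)) : sfD ε d V ≤ d :=
  Nat.findGreatest_le d

open Classical in
theorem sfD_mono {X : Type*} {V W : Set (X → ℝ)} (h : V ⊆ W) (ε : ℝ) (d : ℕ) :
    sfD ε d V ≤ sfD ε d W :=
  Nat.findGreatest_mono (fun _ => sfat_mono_set h) le_rfl

open Classical in
theorem sfD_spec {X : Type*} {V : Set (X → ℝ)} (x0 : X) (hV : V.Nonempty) (ε : ℝ) (d : ℕ) :
    HasSfatTree V ε (sfD ε d V) := by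
  unfold sfD
  exact Nat.findGreatest_spec (Nat.zero_le d) (sfat_zero x0 hV)

open Classical in
theorem sfD_lt {X : Type*} {V : Set (X → ℝ)} {ε : ℝ} {d k : ℕ} (x0 : X) (hV : V.Nonempty)
    (hk : ¬ HasSfatTree V ε k) : sfD ε d V < k := by
  by_contra h
  push_neg at h
  exact hk (sfat_mono_depth h (sfD_spec x0 hV ε d))

open Classical in
theorem sfD_not_succ {X : Type*} {C V : Set (X → ℝ)} (hVC : V ⊆ C) {ε : ℝ} {d : ℕ}
    (hd2 : ¬ HasSfatTree C ε (d + 1)) : ¬ HasSfatTree V ε (sfD ε d V + 1) := by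
  intro hcon
  rcases lt_or_eq_of_le (sfD_le ε d V) with h | h
  · unfold sfD at h hcon
    exact Nat.findGreatest_is_greatest (Nat.lt_succ_self _) (by omega) hcon
  · rw [h] at hcon
    exact hd2 (sfat_mono_set hVC hcon)

end

theorem stmt1 {X : Type*} (ζ : ℝ) (hζ : 0 < ζ ∧ ζ < 1)
    (hζint : ∃ m : ℕ, 0 < m ∧ (m : ℝ) = 1 / (2 * ζ))
    (C : Set (X → ℝ)) (hC : ∀ f ∈ C, ∀ x : X, f x ∈ Set.Icc (0 : ℝ) 1)
    (d : ℕ) (hd : HasSfatTree C (2 * ζ) d ∧ ¬ HasSfatTree C (2 * ζ) (d + 1)) :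
    ∃ L : List (X × ℝ) → X → ℝ,
      (∀ h x, L h x ∈ Set.Icc (0 : ℝ) 1) ∧
      ∀ c ∈ C, ∀ T : ℕ, ∀ x : ℕ → X, ∀ a : ℕ → ℝ,
        (∀ t < T, a t ∈ Set.Icc (0 : ℝ) 1 ∧ |a t - c (x t)| ≤ ζ) →
        Nat.card {t : Fin T //
          5 * ζ < |L ((List.range t.1).map fun j => (x j, a j)) (x t.1) - c (x t.1)|} ≤ d := by
  classical
  obtain ⟨hζ0, hζ1⟩ := hζ
  obtain ⟨m, hm0, hmζ⟩ := hζint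
  have hm1 : (m : ℝ) * (2 * ζ) = 1 := by
    rw [hmζ]; field_simp
  have hgp0 : ∀ j : ℕ, 0 ≤ gpt ζ j := by
    intro j; unfold gpt; positivity
  have hgp1 : ∀ j : ℕ, j < m → gpt ζ j ≤ 1 - ζ := by
    intro j hj
    unfold gpt
    have : (j : ℝ) + 1 ≤ m := by exact_mod_cast hj
    nlinarith
  have hgpm : ∀ i j : ℕ, i ≤ j → gpt ζ i ≤ gpt ζ j := by
    intro i j hij
    unfold gpt
    have : (i : ℝ) ≤ j := by exact_mod_cast hij
    nlinarith
  refine ⟨Lrn C ζ d m, ?_, ?_⟩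
  · -- range of learner
    intro h x
    unfold Lrn
    split
    case isTrue hS =>
      have h1 := Finset.min'_mem _ hS
      have h2 := Finset.max'_mem _ hS
      have hm1' : (SelF C ζ d m h x).min' hS < m :=
        Finset.mem_range.mp (Finset.mem_filter.mp h1).1
      have hm2' : (SelF C ζ d m h x).max' hS < m :=
        Finset.mem_range.mp (Finset.mem_filter.mp h2).1
      have b1 := hgp0 ((SelF C ζ d m h x).min' hS)
      have b2 := hgp0 ((SelF C ζ d m h x).max' hS)
      have b3 := hgp1 _ hm1'
      have b4 := hgp1 _ hm2'
      constructor
      · linarith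
      · linarith
    case isFalse => norm_num
  · intro c hc T x a hfeed
    set Hst : ℕ → List (X × ℝ) := fun t => (List.range t).map fun j => (x j, a j) with hHst
    set Vt : ℕ → Set (X → ℝ) := fun t => VSp C ζ (Hst t) with hVtdef
    have hVC : ∀ t, Vt t ⊆ C := fun t f hf => hf.1
    have hcV : ∀ t, t ≤ T → c ∈ Vt t := by
      intro t ht
      refine ⟨hc, ?_⟩
      intro p hp
      simp only [hHst, List.mem_map, List.mem_range] at hp
      obtain ⟨j, hj, rfl⟩ := hp
      rw [abs_sub_comm]
      exact (hfeed j (lt_of_lt_of_le hj ht)).2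
    have hsub : ∀ t, Vt (t + 1) ⊆ Vt t := by
      intro t f hf
      refine ⟨hf.1, ?_⟩
      intro p hp
      refine hf.2 p ?_
      simp only [hHst, List.mem_map, List.mem_range] at hp ⊢
      obtain ⟨j, hj, rfl⟩ := hp
      exact ⟨j, by omega, rfl⟩
    have hstep : ∀ t, ∀ f ∈ Vt (t + 1), |f (x t) - a t| ≤ ζ := by
      intro t f hf
      have := hf.2 (x t, a t) (by
        simp only [hHst, List.mem_map, List.mem_range]
        exact ⟨t, by omega, rfl⟩)
      exact this
    -- gap lemma for selectors
    have hgap : ∀ t, ∀ i ∈ SelF C ζ d m (Hst t) (x t), ∀ j ∈ SelF C ζ d m (Hst t) (x t),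
        i ≤ j → j ≤ i + 3 := by
      intro t i hi j hj hij
      by_contra hcon
      push_neg at hcon
      simp only [SelF, Finset.mem_filter, Finset.mem_range] at hi hj
      have him : i < m := hi.1
      have hjm : j < m := hj.1
      have hij4 : (i : ℝ) + 4 ≤ j := by exact_mod_cast hcon
      have hsub0 : Bkt (Vt t) (x t) ζ i ⊆
          {f ∈ Vt t | f (x t) ≤ (gpt ζ i + gpt ζ j) / 2 - 2 * ζ} := by
        intro f hf
        refine ⟨hf.1, ?_⟩
        have h1 := abs_le.mp hf.2
        have : gpt ζ i + 8 * ζ ≤ gpt ζ j := by unfold gpt; nlinarith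
        linarith [h1.2]
      have hsub1 : Bkt (Vt t) (x t) ζ j ⊆
          {f ∈ Vt t | (gpt ζ i + gpt ζ j) / 2 + 2 * ζ ≤ f (x t)} := by
        intro f hf
        refine ⟨hf.1, ?_⟩
        have h1 := abs_le.mp hf.2
        have : gpt ζ i + 8 * ζ ≤ gpt ζ j := by unfold gpt; nlinarith
        linarith [h1.1]
      have hIcc : (gpt ζ i + gpt ζ j) / 2 ∈ Set.Icc (0 : ℝ) 1 := by
        constructor
        · have := hgp0 i; have := hgp0 j; linarith
        · have := hgp1 i him; have := hgp1 j hjm; linarith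
      have hjoin := sfat_join (x t) hIcc
        (sfat_mono_set hsub0 hi.2) (sfat_mono_set hsub1 hj.2)
      exact sfD_not_succ (hVC t) hd.2 hjoin
    -- grid point near any feedback value
    have hgrid : ∀ b : ℝ, b ∈ Set.Icc (0 : ℝ) 1 → ∃ j, j < m ∧ |b - gpt ζ j| ≤ ζ := by
      intro b hb
      obtain ⟨hb0, hb1⟩ := hb
      have h2ζ : (0 : ℝ) < 2 * ζ := by linarith
      by_cases hcase : b < 1
      · refine ⟨⌊b / (2 * ζ)⌋₊, ?_, ?_⟩
        · have hlt : b / (2 * ζ) < m := by rw [div_lt_iff₀ h2ζ]; nlinarith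
          exact (Nat.floor_lt (by positivity)).mpr hlt
        · have hfl : (⌊b / (2 * ζ)⌋₊ : ℝ) * (2 * ζ) ≤ b :=
            (le_div_iff₀ h2ζ).mp (Nat.floor_le (by positivity))
          have hfl2 : b < ((⌊b / (2 * ζ)⌋₊ : ℝ) + 1) * (2 * ζ) := by
            rw [← div_lt_iff₀ h2ζ]
            exact Nat.lt_floor_add_one _
          unfold gpt
          rw [abs_le]
          constructor <;> nlinarith
      · have hbe : b = 1 := le_antisymm hb1 (not_lt.mp hcase)
        refine ⟨m - 1, by omega, ?_⟩
        have hcast : ((m - 1 : ℕ) : ℝ) = (m : ℝ) - 1 := by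
          rw [Nat.cast_sub hm0]; simp
        unfold gpt
        rw [hbe, hcast, show (2 * ((m : ℝ) - 1) + 1) * ζ = (m : ℝ) * (2 * ζ) - ζ by ring, hm1,
          show (1 : ℝ) - (1 - ζ) = ζ by ring, abs_of_nonneg (le_of_lt hζ0)]
    -- key decrement
    have key : ∀ t, t < T → 5 * ζ < |Lrn C ζ d m (Hst t) (x t) - c (x t)| →
        sfD (2 * ζ) d (Vt (t + 1)) + 1 ≤ sfD (2 * ζ) d (Vt t) := by
      intro t ht hP
      obtain ⟨j₀, hj₀m, hj₀a⟩ := hgrid (a t) (hfeed t ht).1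
      have hj₀S : j₀ ∉ SelF C ζ d m (Hst t) (x t) := by
        intro hin
        have hSne : (SelF C ζ d m (Hst t) (x t)).Nonempty := ⟨j₀, hin⟩
        have hLval : Lrn C ζ d m (Hst t) (x t) =
            (gpt ζ ((SelF C ζ d m (Hst t) (x t)).min' hSne) +
             gpt ζ ((SelF C ζ d m (Hst t) (x t)).max' hSne)) / 2 := by
          unfold Lrn
          rw [dif_pos hSne]
        set i1 := (SelF C ζ d m (Hst t) (x t)).min' hSne with hi1
        set i2 := (SelF C ζ d m (Hst t) (x t)).max' hSne with hi2
        have h1 : i1 ≤ j₀ := Finset.min'_le _ _ hin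
        have h2 : j₀ ≤ i2 := Finset.le_max' _ _ hin
        have h3 : i2 ≤ i1 + 3 :=
          hgap t i1 (Finset.min'_mem _ _) i2 (Finset.max'_mem _ _) (le_trans h1 h2)
        have g1 : gpt ζ i1 ≤ gpt ζ j₀ := hgpm _ _ h1
        have g2 : gpt ζ j₀ ≤ gpt ζ i2 := hgpm _ _ h2
        have g3 : gpt ζ i2 ≤ gpt ζ i1 + 6 * ζ := by
          unfold gpt
          have : (i2 : ℝ) ≤ (i1 : ℝ) + 3 := by exact_mod_cast h3
          nlinarith
        have hac := abs_le.mp (hfeed t ht).2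
        have haj := abs_le.mp hj₀a
        rw [hLval] at hP
        rcases lt_abs.mp hP with h | h <;> linarith [hac.1, hac.2, haj.1, haj.2]
      have hnot : ¬ HasSfatTree (Bkt (Vt t) (x t) ζ j₀) (2 * ζ) (sfD (2 * ζ) d (Vt t)) := by
        intro hcon
        exact hj₀S (by
          simp only [SelF, Finset.mem_filter, Finset.mem_range]
          exact ⟨hj₀m, hcon⟩)
      have hsubB : Vt (t + 1) ⊆ Bkt (Vt t) (x t) ζ j₀ := by
        intro f hf
        refine ⟨hsub t hf, ?_⟩
        have h1 := abs_le.mp (hstep t f hf)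
        have h2 := abs_le.mp hj₀a
        rw [abs_le]
        constructor <;> linarith
      have hne : (Vt (t + 1)).Nonempty := ⟨c, hcV (t + 1) (by omega)⟩
      have hlt : sfD (2 * ζ) d (Vt (t + 1)) < sfD (2 * ζ) d (Vt t) :=
        sfD_lt (x t) hne (fun hcon => hnot (sfat_mono_set hsubB hcon))
      omega
    have hr_mono : ∀ t, sfD (2 * ζ) d (Vt (t + 1)) ≤ sfD (2 * ζ) d (Vt t) :=
      fun t => sfD_mono (hsub t) _ _
    set Pm : ℕ → Prop := fun t => 5 * ζ < |Lrn C ζ d m (Hst t) (x t) - c (x t)| with hPm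
    have count : ∀ n, n ≤ T → ((Finset.range n).filter Pm).card + sfD (2 * ζ) d (Vt n) ≤ d := by
      intro n
      induction n with
      | zero => intro _; simpa using sfD_le (2 * ζ) d (Vt 0)
      | succ n ih =>
        intro hn
        have hn' : n ≤ T := by omega
        rw [Finset.range_add_one, Finset.filter_insert]
        by_cases hPn : Pm n
        · rw [if_pos hPn, Finset.card_insert_of_notMem (by simp)]
          have h1 := key n (by omega) hPn
          have h2 := ih hn'
          omega
        · rw [if_neg hPn]
          have h1 := hr_mono n
          have h2 := ih hn'
          omega
    have hfin : Nat.card {t : Fin T //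
        5 * ζ < |Lrn C ζ d m ((List.range t.1).map fun j => (x j, a j)) (x t.1) - c (x t.1)|}
        ≤ ((Finset.range T).filter Pm).card := by
      rw [← Nat.card_eq_finsetCard]
      refine Nat.card_le_card_of_injective
        (fun s => ⟨s.1.1, Finset.mem_filter.mpr ⟨Finset.mem_range.mpr s.1.2, s.2⟩⟩) ?_
      intro s1 s2 hss
      have : s1.1.1 = s2.1.1 := congrArg Subtype.val hss
      exact Subtype.ext (Fin.ext this)
    have := count T le_rfl
    omega
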